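/- For every integer n ≥ 1 and every fixed x ∈ ℝ, the derivative of the Kravchuk polynomial with respect to a satisfies d/da K_n(x,a) = ∑_{i=0}^{n−1} ((−1)^{n+1+i}/(n−i))·K_i(x,a). -/

import Mathlib

/-- Generalized binomial coefficient `C(t, k) = t(t-1)⋯(t-k+1)/k!` of a real number. -/
noncomputable def genBinom (t : ℝ) (k : ℕ) : ℝ :=
  (∏ j ∈ Finset.range k, (t - j)) / (Nat.factorial k)

/-- The binary Kravchuk polynomial `K_n(x,a) = ∑_{i=0}^n (-1)^i C(x,i) C(a-x, n-i)`. -/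
noncomputable def K (n : ℕ) (x a : ℝ) : ℝ :=
  ∑ i ∈ Finset.range (n + 1), (-1 : ℝ) ^ i * genBinom x i * genBinom (a - x) (n - i)

/-- Auxiliary: the claimed derivative of `a ↦ genBinom a m`. -/
noncomputable def S (m : ℕ) (t : ℝ) : ℝ :=
  ∑ k ∈ Finset.range m, (-1 : ℝ) ^ (m + 1 + k) / ((m : ℝ) - k) * genBinom t k

lemma genBinom_succ (t : ℝ) (k : ℕ) :
    genBinom t (k + 1) = genBinom t k * (t - k) / (k + 1) := by
  rw [genBinom, genBinom, Finset.prod_range_succ, div_mul_eq_mul_div, div_div]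
  congr 1
  push_cast [Nat.factorial_succ]
  ring

lemma S_rec (m : ℕ) (t : ℝ) :
    ((m : ℝ) + 1) * S (m+1) t = (t - (m:ℝ)) * S m t + genBinom t m := by
  set F : ℕ → ℝ := fun k => (-1 : ℝ)^(m+k) * k / ((m:ℝ)+1-k) * genBinom t k with hF
  have key : ∀ k ∈ Finset.range m,
      (t - (m:ℝ)) * ((-1:ℝ)^(m+1+k)/((m:ℝ)-k) * genBinom t k)
        = F (k+1) - (-1:ℝ)^(m+1+k) * genBinom t k := by
    intro k hk
    rw [Finset.mem_range] at hk
    have hmk : ((m:ℝ) - k) ≠ 0 := by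
      have : (k:ℝ) < m := by exact_mod_cast hk
      linarith
    have hk1 : ((k:ℝ) + 1) ≠ 0 := by positivity
    have he : m + (k+1) = m+1+k := by omega
    simp only [hF, genBinom_succ, he]
    push_cast
    simp only [add_sub_add_right_eq_sub]
    field_simp
    ring
  have h1 : (t - (m:ℝ)) * S m t
      = (∑ k ∈ Finset.range m, F (k+1)) - ∑ k ∈ Finset.range m, (-1:ℝ)^(m+1+k) * genBinom t k := by
    rw [S, Finset.mul_sum, ← Finset.sum_sub_distrib]
    exact Finset.sum_congr rfl key
  have hF0 : F 0 = 0 := by simp [hF]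
  have h2 : ∑ k ∈ Finset.range m, F (k+1) = ∑ k ∈ Finset.range (m+1), F k := by
    rw [Finset.sum_range_succ' F m, hF0, add_zero]
  have h3 : ((m : ℝ) + 1) * S (m+1) t
      = (∑ k ∈ Finset.range (m+1), F k)
        + ∑ k ∈ Finset.range (m+1), (-1:ℝ)^(m+k) * genBinom t k := by
    rw [S, Finset.mul_sum, ← Finset.sum_add_distrib]
    refine Finset.sum_congr rfl ?_
    intro k hk
    rw [Finset.mem_range] at hk
    have hmk : ((m:ℝ) + 1 - k) ≠ 0 := by
      have : (k:ℝ) < m + 1 := by exact_mod_cast hk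
      linarith
    have he : m + 1 + 1 + k = (m + k) + 2 := by omega
    have hp : (-1:ℝ)^(m+1+1+k) = (-1:ℝ)^(m+k) := by
      rw [he, pow_add]; norm_num
    simp only [hF, hp]
    push_cast
    field_simp
    ring
  have h4 : ∑ k ∈ Finset.range (m+1), (-1:ℝ)^(m+k) * genBinom t k
      = -(∑ k ∈ Finset.range m, (-1:ℝ)^(m+1+k) * genBinom t k) + genBinom t m := by
    rw [Finset.sum_range_succ, ← Finset.sum_neg_distrib]
    congr 1
    · exact Finset.sum_congr rfl fun k _ => by rw [pow_add, pow_add, pow_add]; ring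
    · rw [← two_mul, pow_mul]; norm_num
  rw [h3, h4, h1, h2]
  ring

lemma hasDerivAt_genBinom (m : ℕ) (a : ℝ) :
    HasDerivAt (fun t => genBinom t m) (S m a) a := by
  induction m with
  | zero =>
    have : S 0 a = 0 := by simp [S]
    rw [this]
    simp only [genBinom]
    simpa using hasDerivAt_const a (1:ℝ)
  | succ k ih =>
    have h : HasDerivAt (fun t => genBinom t k * (t - k) / (k+1))
        ((S k a * (a - k) + genBinom a k * 1) / (k+1)) a :=
      (ih.mul ((hasDerivAt_id a).sub_const _)).div_const _
    have he : (fun t : ℝ => genBinom t k * (t - k) / (k+1)) = fun t => genBinom t (k+1) := by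
      funext t; rw [genBinom_succ]
    rw [he] at h
    convert h using 1
    have hk1 : ((k:ℝ) + 1) ≠ 0 := by positivity
    field_simp
    linarith [S_rec k a]

lemma hasDerivAt_genBinom_sub (m : ℕ) (x a : ℝ) :
    HasDerivAt (fun t => genBinom (t - x) m) (S m (a - x)) a := by
  have h := (hasDerivAt_genBinom m (a - x)).comp a ((hasDerivAt_id a).sub_const x)
  rw [mul_one] at h
  exact h

/-- For `n ≥ 1`, `d/da K_n(x,a) = ∑_{i=0}^{n-1} ((-1)^{n+1+i}/(n-i)) K_i(x,a)`. -/
theorem kravchuk_deriv_a (n : ℕ) (hn : 1 ≤ n) (x a : ℝ) :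
    deriv (fun t : ℝ => K n x t) a
      = ∑ i ∈ Finset.range n, ((-1 : ℝ) ^ (n + 1 + i) / ((n : ℝ) - (i : ℝ))) * K i x a := by
  have hd : HasDerivAt (fun t : ℝ => K n x t)
      (∑ i ∈ Finset.range (n+1), (-1:ℝ)^i * genBinom x i * S (n-i) (a-x)) a := by
    unfold K
    exact HasDerivAt.fun_sum fun i _ =>
      ((hasDerivAt_genBinom_sub (n-i) x a).const_mul _)
  rw [hd.deriv, Finset.sum_range_succ]
  have hS0 : S (n - n) (a - x) = 0 := by simp [S]
  rw [hS0, mul_zero, add_zero]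
  simp only [S, K, Finset.mul_sum]
  rw [Finset.sum_sigma', Finset.sum_sigma']
  refine Finset.sum_nbij' (fun p => ⟨p.1 + p.2, p.1⟩) (fun p => ⟨p.2, p.1 - p.2⟩) ?_ ?_ ?_ ?_ ?_
  · rintro ⟨i, k⟩ h
    simp only [Finset.mem_sigma, Finset.mem_range] at h ⊢
    omega
  · rintro ⟨m, j⟩ h
    simp only [Finset.mem_sigma, Finset.mem_range] at h ⊢
    omega
  · rintro ⟨i, k⟩ h
    simp
  · rintro ⟨m, j⟩ h
    simp only [Finset.mem_sigma, Finset.mem_range] at h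
    have : j + (m - j) = m := by omega
    simp [this]
  · rintro ⟨i, k⟩ h
    simp only [Finset.mem_sigma, Finset.mem_range] at h
    obtain ⟨hi, hk⟩ := h
    have h1 : i + k - i = k := by omega
    have hc : ((n - i : ℕ) : ℝ) = (n : ℝ) - (i : ℝ) := Nat.cast_sub (by omega)
    have hp : (-1:ℝ)^(n+1+(i+k)) = (-1:ℝ)^(n-i+1+k) := by
      rw [show n+1+(i+k) = (n-i+1+k) + 2*i from by omega, pow_add, pow_mul]
      norm_num
    rw [h1, hc, hp]
    push_cast
    ring
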